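/- Let ℍ denote the hyperbolic upper half-plane and for φ ∈ ℝ let A(φ) ∈ SL(2,ℝ) be the rotation matrix with rows (cos φ, sin φ) and (−sin φ, cos φ), acting on ℍ by Möbius transformations; A(φ) fixes the point i and acts as the hyperbolic rotation about i by angle 2φ. If π/3 ≤ φ ≤ 2π/3, then for every z ∈ ℍ one has dist(z, A(φ)·z) ≥ √3 · dist(z, i). -/

import Mathlib

open UpperHalfPlane
open scoped MatrixGroups

/-- The rotation matrix `A(φ) = (cos φ, sin φ; −sin φ, cos φ)` as an element of `SL(2, ℝ)`. -/
noncomputable def rotationSL (φ : ℝ) : SL(2, ℝ) :=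
  ⟨!![Real.cos φ, Real.sin φ; -Real.sin φ, Real.cos φ], by
    rw [Matrix.det_fin_two_of]
    nlinarith [Real.sin_sq_add_cos_sq φ]⟩

lemma convexOn_sinh : ConvexOn ℝ (Set.Ici 0) Real.sinh := by
  apply MonotoneOn.convexOn_of_deriv (convex_Ici 0) Real.continuous_sinh.continuousOn
  · exact fun x _ => Real.differentiable_sinh.differentiableAt.differentiableWithinAt
  · rw [interior_Ici]
    intro x hx y hy hxy
    rw [Real.deriv_sinh, Real.cosh_le_cosh]
    rwa [abs_of_pos hx, abs_of_pos hy]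

lemma sinh_mul_le {l r : ℝ} (hl0 : 0 ≤ l) (hl1 : l ≤ 1) (hr : 0 ≤ r) :
    Real.sinh (l * r) ≤ l * Real.sinh r := by
  have h := convexOn_sinh.2 (Set.mem_Ici.mpr hr) (Set.mem_Ici.mpr le_rfl) hl0
    (by linarith : (0:ℝ) ≤ 1 - l) (by ring)
  simpa using h

/-- If `π/3 ≤ φ ≤ 2π/3` then the hyperbolic rotation `A(φ)` about `i` (by angle `2φ`)
displaces every point `z ∈ ℍ` by at least `√3` times its distance to the center `i`. -/
theorem dist_rotation_smul_ge (φ : ℝ) (hφ₁ : Real.pi / 3 ≤ φ) (hφ₂ : φ ≤ 2 * Real.pi / 3)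
    (z : ℍ) :
    dist z (rotationSL φ • z) ≥ Real.sqrt 3 * dist z UpperHalfPlane.I := by
  have hπ := Real.pi_pos
  set s := Real.sin φ with hs
  set c := Real.cos φ with hc
  have hpy : s ^ 2 + c ^ 2 = 1 := Real.sin_sq_add_cos_sq φ
  have hs32 : Real.sqrt 3 / 2 ≤ s := by
    rcases le_total φ (Real.pi / 2) with h | h
    · have := Real.strictMonoOn_sin.monotoneOn
        (Set.mem_Icc.mpr ⟨by linarith, by linarith⟩)
        (Set.mem_Icc.mpr ⟨by linarith, h⟩) hφ₁
      rwa [Real.sin_pi_div_three] at this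
    · rw [hs, ← Real.sin_pi_sub φ]
      have := Real.strictMonoOn_sin.monotoneOn
        (Set.mem_Icc.mpr ⟨by linarith, by linarith⟩)
        (Set.mem_Icc.mpr ⟨by linarith, by linarith⟩)
        (by linarith : Real.pi / 3 ≤ Real.pi - φ)
      rwa [Real.sin_pi_div_three] at this
    
  have hs0 : 0 < s := lt_of_lt_of_le (by positivity) hs32
  set w := rotationSL φ • z with hw
  have hcoe : (w : ℂ) = ((c : ℂ) * z + s) / (-(s : ℂ) * z + c) := by
    rw [hw, UpperHalfPlane.specialLinearGroup_apply]
    simp [rotationSL]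
    rw [hs, hc]
    push_cast
    ring
  set D : ℂ := -(s : ℂ) * z + c with hD
  have hDim : D.im = -s * z.im := by
    simp [hD, Complex.add_im, Complex.mul_im]
  have hDne : D ≠ 0 := by
    intro h
    have := congrArg Complex.im h
    rw [hDim] at this
    simp at this
    rcases this with h1 | h2
    · exact absurd h1 (ne_of_gt hs0)
    · exact absurd h2 z.im_ne_zero
  have hnsq : Complex.normSq D ≠ 0 := (Complex.normSq_pos.mpr hDne).ne'
  have him : w.im = z.im / Complex.normSq D := by
    rw [← UpperHalfPlane.coe_im, hcoe, Complex.div_im]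
    simp only [Complex.add_im, Complex.add_re, Complex.mul_im, Complex.mul_re,
      Complex.ofReal_re, Complex.ofReal_im, Complex.neg_re, Complex.neg_im,
      Complex.normSq_apply, UpperHalfPlane.coe_re, UpperHalfPlane.coe_im]
    rw [div_sub_div_same, hD]
    simp only [Complex.add_im, Complex.add_re, Complex.mul_im, Complex.mul_re,
      Complex.ofReal_re, Complex.ofReal_im, Complex.neg_re, Complex.neg_im,
      Complex.normSq_apply, UpperHalfPlane.coe_re, UpperHalfPlane.coe_im]
    rw [div_eq_div_iff]
    · linear_combination (z.im * ((-s * z.re + c) * (-s * z.re + c) + (-s * z.im) * (-s * z.im))) * hpy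
    · nlinarith [mul_pos (mul_pos hs0 z.im_pos) (mul_pos hs0 z.im_pos), sq_nonneg (-s * z.re + c), z.im_pos, hs0]
    · exact hnsq
  have habsD : ‖D‖ ≠ 0 := by
    simpa using hDne
  have hsub : (z : ℂ) - w = (-(s : ℂ) * (((z : ℂ) - Complex.I) * ((z : ℂ) + Complex.I))) / D := by
    rw [hcoe, eq_div_iff hDne, sub_mul, div_mul_cancel₀ _ hDne, hD]
    linear_combination (-(s : ℂ)) * Complex.I_sq
  have hdistC : dist (z : ℂ) (w : ℂ) = s * (‖(z : ℂ) - Complex.I‖ *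
      ‖(z : ℂ) + Complex.I‖) / ‖D‖ := by
    rw [Complex.dist_eq, hsub, norm_div, norm_mul, norm_neg, Complex.norm_real, Real.norm_eq_abs,
      abs_of_pos hs0, norm_mul]
  have hsq : Real.sqrt (z.im * w.im) = z.im / ‖D‖ := by
    rw [him, show z.im * (z.im / Complex.normSq D) = (z.im / ‖D‖) ^ 2 by
      rw [div_pow, Complex.sq_norm]; ring]
    exact Real.sqrt_sq (by positivity)
  have hsinh : Real.sinh (dist z UpperHalfPlane.I) = ‖(z : ℂ) - Complex.I‖ *
      ‖(z : ℂ) + Complex.I‖ / (2 * z.im) := by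
    have h1 := UpperHalfPlane.sinh_half_dist z UpperHalfPlane.I
    have h2 := UpperHalfPlane.cosh_half_dist z UpperHalfPlane.I
    rw [show dist z UpperHalfPlane.I = 2 * (dist z UpperHalfPlane.I / 2) by ring,
      Real.sinh_two_mul, h1, h2]
    simp only [Complex.dist_eq, UpperHalfPlane.coe_I, Complex.conj_I, sub_neg_eq_add,
      UpperHalfPlane.I_im, mul_one]
    have hy := z.im_pos
    have hsq' : Real.sqrt z.im * Real.sqrt z.im = z.im := Real.mul_self_sqrt hy.le
    have hsne : Real.sqrt z.im ≠ 0 := by positivity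
    field_simp
    linear_combination (-(1 * ‖(z : ℂ) - Complex.I‖ * ‖(z : ℂ) + Complex.I‖)) * hsq'
  have hr0 : 0 ≤ dist z UpperHalfPlane.I := dist_nonneg
  have hX : dist (z : ℂ) (w : ℂ) / (2 * Real.sqrt (z.im * w.im)) =
      s * Real.sinh (dist z UpperHalfPlane.I) := by
    rw [hdistC, hsq, hsinh]
    field_simp
    try ring
  rw [UpperHalfPlane.dist_eq, hX]
  have hl1 : Real.sqrt 3 / 2 ≤ 1 := by
    rw [div_le_one (by norm_num : (0:ℝ) < 2)]
    nlinarith [Real.sq_sqrt (by norm_num : (0:ℝ) ≤ 3), Real.sqrt_nonneg 3]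
  have hshr : 0 ≤ Real.sinh (dist z UpperHalfPlane.I) := Real.sinh_nonneg_iff.mpr hr0
  have key : Real.sinh (Real.sqrt 3 / 2 * dist z UpperHalfPlane.I) ≤
      s * Real.sinh (dist z UpperHalfPlane.I) := by
    calc Real.sinh (Real.sqrt 3 / 2 * dist z UpperHalfPlane.I)
        ≤ Real.sqrt 3 / 2 * Real.sinh (dist z UpperHalfPlane.I) :=
          sinh_mul_le (by positivity) hl1 hr0
      _ ≤ s * Real.sinh (dist z UpperHalfPlane.I) :=
          mul_le_mul_of_nonneg_right hs32 hshr
  have harsinh : Real.sqrt 3 / 2 * dist z UpperHalfPlane.I ≤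
      Real.arsinh (s * Real.sinh (dist z UpperHalfPlane.I)) := by
    rw [← Real.arsinh_sinh (Real.sqrt 3 / 2 * dist z UpperHalfPlane.I)]
    exact Real.arsinh_le_arsinh.mpr key
  linarith
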